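/- arXiv:1805.11691 — 2 statements merged into one kernel-verified Lean document; each statement's English description precedes it below -/
import Mathlib

section
/- A finite nilpotent group G belongs to C₃ (i.e. ∑_{H ⊴ G} |H| ≤ 2|G|) if and only if G is cyclic and |G| is a deficient or perfect number (i.e. σ(|G|) ≤ 2|G|). -/
open Subgroup

/-- The sum of the orders of all normal subgroups of `G`. -/
noncomputable def normalSum (G : Type*) [Group G] : ℕ :=
  ∑ᶠ (H : Subgroup G) (_ : H.Normal), Nat.card H

section Aux
variable {G : Type*} [Group G]

private lemma normalSum_eq_sum [Finite G] [Fintype (Subgroup G)]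
    [DecidablePred (Subgroup.Normal (G := G))] :
    normalSum G = ∑ H ∈ Finset.univ.filter (fun H : Subgroup G => H.Normal), Nat.card H := by
  rw [normalSum, Finset.sum_filter, ← finsum_eq_sum_of_fintype]
  exact finsum_congr fun H => finsum_eq_if

private lemma sum_le_normalSum [Finite G] (s : Finset (Subgroup G))
    (hs : ∀ H ∈ s, H.Normal) : ∑ H ∈ s, Nat.card H ≤ normalSum G := by
  classical
  letI : Fintype (Subgroup G) := Fintype.ofFinite _
  rw [normalSum_eq_sum]
  exact Finset.sum_le_sum_of_subset (fun H hH => Finset.mem_filter.mpr ⟨Finset.mem_univ _, hs H hH⟩)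

private lemma subgroup_eq_zpowers [Finite G] {g : G} (hg : ∀ x : G, x ∈ zpowers g)
    (H : Subgroup G) : H = zpowers (g ^ (Nat.card G / Nat.card H)) := by
  have hn : Nat.card G ≠ 0 := Nat.card_pos.ne'
  have hd : Nat.card H ∣ Nat.card G := card_subgroup_dvd_card H
  have hd0 : Nat.card H ≠ 0 := Nat.card_pos.ne'
  set n := Nat.card G
  set d := Nat.card H
  have hog : orderOf g = n := orderOf_eq_card_of_forall_mem_zpowers hg
  have hcard : Nat.card (zpowers (g ^ (n / d))) = d := by
    rw [Nat.card_zpowers, orderOf_pow, hog, Nat.gcd_eq_right (Nat.div_dvd_of_dvd hd),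
      Nat.div_div_self hd hn]
  have hle : H ≤ zpowers (g ^ (n / d)) := by
    intro x hx
    have hxd : x ^ d = 1 := by
      have h1 : (⟨x, hx⟩ : H) ^ d = 1 := pow_card_eq_one'
      simpa using congrArg (Subtype.val) h1
    obtain ⟨k, rfl⟩ := Subgroup.mem_zpowers_iff.mp (hg x)
    have hkd : ((n : ℤ)) ∣ k * d := by
      have h1 : g ^ (k * (d : ℤ)) = 1 := by
        rw [zpow_mul, zpow_natCast]; exact hxd
      rwa [← orderOf_dvd_iff_zpow_eq_one, hog] at h1
    obtain ⟨c, hc⟩ := hkd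
    have hnd : (n : ℤ) = ((n / d : ℕ) : ℤ) * d := by
      exact_mod_cast (Nat.div_mul_cancel hd).symm
    have hk : k = ((n / d : ℕ) : ℤ) * c := by
      have hd0' : (d : ℤ) ≠ 0 := Int.natCast_ne_zero.mpr hd0
      apply mul_right_cancel₀ hd0'
      rw [hc, hnd]; ring
    refine Subgroup.mem_zpowers_iff.mpr ⟨c, ?_⟩
    rw [← zpow_natCast g, ← zpow_mul, ← hk]
  exact eq_of_le_of_card_ge hle (le_of_eq hcard)

private lemma card_inj_of_isCyclic [Finite G] (hc : IsCyclic G) {H K : Subgroup G}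
    (h : Nat.card H = Nat.card K) : H = K := by
  obtain ⟨g, hg⟩ := hc.exists_generator
  rw [subgroup_eq_zpowers hg H, subgroup_eq_zpowers hg K, h]

private lemma normalSum_of_isCyclic [Finite G] (hc : IsCyclic G) :
    normalSum G = ∑ d ∈ (Nat.card G).divisors, d := by
  classical
  letI : Fintype (Subgroup G) := Fintype.ofFinite _
  haveI := hc
  have hall : ∀ H : Subgroup G, H.Normal := fun H => by
    have comm := (IsCyclic.commGroup (α := G)).mul_comm
    exact ⟨fun a ha b => by rw [comm b a, mul_assoc, mul_inv_cancel, mul_one]; exact ha⟩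
  obtain ⟨g, hg⟩ := hc.exists_generator
  have hn : Nat.card G ≠ 0 := Nat.card_pos.ne'
  rw [normalSum_eq_sum, Finset.filter_true_of_mem (fun H _ => hall H)]
  refine Finset.sum_nbij' (i := fun H => Nat.card H)
    (j := fun d => zpowers (g ^ (Nat.card G / d))) ?_ ?_ ?_ ?_ ?_
  · intro H _
    exact Nat.mem_divisors.mpr ⟨card_subgroup_dvd_card H, hn⟩
  · intro d _; exact Finset.mem_univ _
  · intro H _; exact (subgroup_eq_zpowers hg H).symm
  · intro d hd
    obtain ⟨hdvd, -⟩ := Nat.mem_divisors.mp hd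
    show Nat.card (zpowers (g ^ (Nat.card G / d))) = d
    have hog : orderOf g = Nat.card G := orderOf_eq_card_of_forall_mem_zpowers hg
    rw [Nat.card_zpowers, orderOf_pow, hog, Nat.gcd_eq_right (Nat.div_dvd_of_dvd hdvd),
      Nat.div_div_self hdvd hn]
  · intro H _; rfl

end Aux

section Aux2
variable {G : Type*} [Group G]

private lemma isCoatom_index_prime [Finite G] {M : Subgroup G} [M.Normal] (hM : IsCoatom M) :
    M.index.Prime := by
  have h0 : M.index ≠ 0 := Subgroup.index_ne_zero_of_finite
  have h1 : M.index ≠ 1 := fun h => hM.1 (Subgroup.index_eq_one.mp h)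
  obtain ⟨p, hp, hpd⟩ := Nat.exists_prime_and_dvd h1
  haveI := Fact.mk hp
  rw [Subgroup.index_eq_card] at hpd
  obtain ⟨q, hq⟩ := exists_prime_orderOf_dvd_card' p hpd
  have hq1 : q ≠ 1 := by
    intro h; rw [h, orderOf_one] at hq; exact hp.ne_one hq.symm
  set φ := QuotientGroup.mk' M with hφdef
  have hφ : Function.Surjective φ := QuotientGroup.mk'_surjective M
  set K := (zpowers q).comap φ with hKdef
  have hmap : Subgroup.map φ K = zpowers q := map_comap_eq_self_of_surjective hφ _
  have hMK : M ≤ K := by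
    intro m hm
    have : φ m = 1 := (QuotientGroup.eq_one_iff m).mpr hm
    show φ m ∈ zpowers q
    rw [this]; exact one_mem _
  rcases eq_or_lt_of_le hMK with heq | hlt
  · exfalso
    have hqmem : q ∈ Subgroup.map φ K := hmap ▸ mem_zpowers q
    rw [← heq] at hqmem
    obtain ⟨m, hm, hmq⟩ := hqmem
    have : φ m = 1 := (QuotientGroup.eq_one_iff m).mpr hm
    exact hq1 (by rw [← hmq, this])
  · have hK : K = ⊤ := hM.2 K hlt
    have htop : zpowers q = ⊤ := by
      rw [← hmap, hK, ← MonoidHom.range_eq_map]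
      exact MonoidHom.range_eq_top.mpr hφ
    have : Nat.card (G ⧸ M) = p := by
      rw [← hq, ← Nat.card_zpowers, htop, Subgroup.card_top]
    rw [Subgroup.index_eq_card, this]
    exact hp

private lemma inf_index_dvd [Finite G] (s : Finset (Subgroup G)) (hs : ∀ M ∈ s, M.Normal) :
    (s.inf id).index ∣ ∏ M ∈ s, M.index := by
  classical
  induction s using Finset.induction_on with
  | empty => simp [Subgroup.index_top]
  | @insert M₀ s hM₀ ih =>
    rw [Finset.inf_insert, Finset.prod_insert hM₀]
    simp only [id_eq]
    have h1 : ((M₀ : Subgroup G) ⊓ s.inf id).index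
        = M₀.relIndex (s.inf id) * (s.inf id).index := by
      rw [← Subgroup.inf_relIndex_right, Subgroup.relIndex_mul_index inf_le_right]
    rw [h1]
    haveI : M₀.Normal := hs M₀ (Finset.mem_insert_self _ _)
    exact mul_dvd_mul (Subgroup.relIndex_dvd_index_of_normal M₀ (s.inf id))
      (ih fun M hM => hs M (Finset.mem_insert_of_mem hM))

private lemma exists_avoid [Finite G] (hnc : NormalizerCondition G)
    (hinj : ∀ M₁ M₂ : Subgroup G, IsCoatom M₁ → IsCoatom M₂ → M₁.index = M₂.index → M₁ = M₂)
    (s : Finset (Subgroup G)) (hs : ∀ M ∈ s, IsCoatom M) : ∃ x : G, ∀ M ∈ s, x ∉ M := by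
  classical
  induction s using Finset.induction_on with
  | empty => exact ⟨1, by simp⟩
  | @insert M₀ s hM₀ ih =>
    obtain ⟨x, hx⟩ := ih fun M hM => hs M (Finset.mem_insert_of_mem hM)
    have hco : ∀ M ∈ s, IsCoatom M := fun M hM => hs M (Finset.mem_insert_of_mem hM)
    have hM₀c : IsCoatom M₀ := hs M₀ (Finset.mem_insert_self _ _)
    by_cases hxM₀ : x ∉ M₀
    · exact ⟨x, fun M hM => by
        rcases Finset.mem_insert.mp hM with rfl | hM'
        · exact hxM₀
        · exact hx M hM'⟩
    push_neg at hxM₀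
    have hnle : ¬ s.inf id ≤ M₀ := by
      intro hle
      have h1 : M₀.index ∣ (s.inf id).index := Subgroup.index_dvd_of_le hle
      have h2 := inf_index_dvd s fun M hM =>
        Subgroup.NormalizerCondition.normal_of_coatom M hnc (hco M hM)
      haveI : M₀.Normal := Subgroup.NormalizerCondition.normal_of_coatom M₀ hnc hM₀c
      have hp := isCoatom_index_prime hM₀c
      obtain ⟨M, hM, hdvd⟩ := (hp.prime.dvd_finset_prod_iff _).mp (h1.trans h2)
      have heq : M₀.index = M.index :=
        (haveI : M.Normal := Subgroup.NormalizerCondition.normal_of_coatom M hnc (hco M hM)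
         (Nat.prime_dvd_prime_iff_eq hp (isCoatom_index_prime (hco M hM))).mp hdvd)
      have : M₀ = M := hinj M₀ M hM₀c (hco M hM) heq
      exact hM₀ (this ▸ hM)
    obtain ⟨y, hy1, hy2⟩ := SetLike.not_le_iff_exists.mp hnle
    refine ⟨x * y, fun M hM => ?_⟩
    rcases Finset.mem_insert.mp hM with rfl | hM'
    · intro hmem
      exact hy2 ((Subgroup.mul_mem_cancel_left M hxM₀).mp hmem)
    · intro hmem
      have hyM : y ∈ M := by
        have : s.inf id ≤ M := Finset.inf_le hM'
        exact this hy1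
      exact hx M hM' ((Subgroup.mul_mem_cancel_right M hyM).mp hmem)

end Aux2

section Main
variable {G : Type*} [Group G]

private lemma isCyclic_of_normalSum_le [Finite G] (hnil : Group.IsNilpotent G)
    (hle : normalSum G ≤ 2 * Nat.card G) : IsCyclic G := by
  classical
  by_contra hGc
  haveI := hnil
  have hnc : NormalizerCondition G := normalizerCondition_of_isNilpotent
  letI : Fintype (Subgroup G) := Fintype.ofFinite _
  have hex : ∃ M₁ M₂ : Subgroup G,
      IsCoatom M₁ ∧ IsCoatom M₂ ∧ M₁.index = M₂.index ∧ M₁ ≠ M₂ := by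
    by_contra hcon
    push_neg at hcon
    obtain ⟨x, hx⟩ := exists_avoid hnc
      (fun M₁ M₂ h₁ h₂ hidx => hcon M₁ M₂ h₁ h₂ hidx)
      (Finset.univ.filter (fun M => IsCoatom M)) (fun M hM => (Finset.mem_filter.mp hM).2)
    apply hGc
    have htop : zpowers x = ⊤ := by
      rcases eq_top_or_exists_le_coatom (zpowers x) with h | ⟨M, hM, hle'⟩
      · exact h
      · exact absurd (hle' (Subgroup.mem_zpowers x))
          (hx M (Finset.mem_filter.mpr ⟨Finset.mem_univ _, hM⟩))
    exact ⟨⟨x, fun y => htop.ge (Subgroup.mem_top y)⟩⟩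
  obtain ⟨M₁, M₂, h₁, h₂, hidx, hne⟩ := hex
  haveI hn₁ : M₁.Normal := Subgroup.NormalizerCondition.normal_of_coatom M₁ hnc h₁
  haveI hn₂ : M₂.Normal := Subgroup.NormalizerCondition.normal_of_coatom M₂ hnc h₂
  set p := M₁.index with hpdef
  have hp : p.Prime := isCoatom_index_prime h₁
  haveI := Fact.mk hp
  set N := M₁ ⊓ M₂ with hNdef
  haveI hNn : N.Normal := inferInstance
  have hrel : M₁.relIndex M₂ = p := by
    have hdvd : M₁.relIndex M₂ ∣ p := Subgroup.relIndex_dvd_index_of_normal M₁ M₂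
    have hne1 : M₁.relIndex M₂ ≠ 1 := by
      intro h1
      rw [Subgroup.relIndex_eq_one] at h1
      have hle' := h1
      rcases eq_or_lt_of_le hle' with heq | hlt
      · exact hne heq.symm
      · exact h₁.1 (h₂.2 M₁ hlt)
    exact ((Nat.dvd_prime hp).mp hdvd).resolve_left hne1
  have hNidx : N.index = p * p := by
    rw [← Subgroup.relIndex_mul_index (inf_le_right : N ≤ M₂),
      Subgroup.inf_relIndex_right, hrel, ← hidx]
  set Q := G ⧸ N with hQdef
  have hcardQ : Nat.card Q = p ^ 2 := by rw [← Subgroup.index_eq_card, hNidx, sq]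
  have hcomm : ∀ a b : Q, a * b = b * a := IsPGroup.commutative_of_card_eq_prime_sq hcardQ
  set φ := QuotientGroup.mk' N with hφdef
  have hφ : Function.Surjective φ := QuotientGroup.mk'_surjective N
  have hker : φ.ker = N := QuotientGroup.ker_mk' N
  have hcomap_map : ∀ (M : Subgroup G), N ≤ M → (Subgroup.map φ M).comap φ = M := fun M hM =>
    Subgroup.comap_map_eq_self (by rw [hker]; exact hM)
  have himgidx : ∀ (M : Subgroup G), N ≤ M → (Subgroup.map φ M).index = M.index := by
    intro M hM
    have h := Subgroup.index_comap_of_surjective (H := Subgroup.map φ M) hφ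
    rw [hcomap_map M hM] at h
    exact h.symm
  have hQnc : ¬ IsCyclic Q := by
    intro hQ
    have hidx1 : (Subgroup.map φ M₁).index = p := by
      rw [himgidx M₁ inf_le_left]
    have hidx2 : (Subgroup.map φ M₂).index = p := by
      rw [himgidx M₂ inf_le_right, ← hidx]
    have hc1 : Nat.card (Subgroup.map φ M₁) * (Subgroup.map φ M₁).index = p ^ 2 := by
      rw [Subgroup.card_mul_index, hcardQ]
    have hc2 : Nat.card (Subgroup.map φ M₂) * (Subgroup.map φ M₂).index = p ^ 2 := by
      rw [Subgroup.card_mul_index, hcardQ]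
    rw [hidx1] at hc1
    rw [hidx2] at hc2
    have hcard : Nat.card (Subgroup.map φ M₁) = Nat.card (Subgroup.map φ M₂) :=
      Nat.eq_of_mul_eq_mul_right hp.pos (hc1.trans hc2.symm)
    have heq := card_inj_of_isCyclic hQ hcard
    have heq2 := congrArg (Subgroup.comap φ) heq
    rw [hcomap_map M₁ inf_le_left, hcomap_map M₂ inf_le_right] at heq2
    exact hne heq2
  have horder : ∀ q : Q, q ≠ 1 → orderOf q = p := by
    intro q hq
    have hd : orderOf q ∣ p ^ 2 := hcardQ ▸ orderOf_dvd_natCard q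
    obtain ⟨k, hk2, hk⟩ := (Nat.dvd_prime_pow hp).mp hd
    interval_cases k
    · rw [pow_zero] at hk
      exact absurd (orderOf_eq_one_iff.mp hk) hq
    · simpa using hk
    · exfalso
      apply hQnc
      have hcz : Nat.card (zpowers q) = Nat.card Q := by
        rw [Nat.card_zpowers, hk, hcardQ]
      have htop := Subgroup.eq_top_of_card_eq (H := zpowers q) hcz
      exact ⟨⟨q, fun y => htop.ge (Subgroup.mem_top y)⟩⟩
  letI : Fintype Q := Fintype.ofFinite Q
  set E : Finset Q := Finset.univ.erase 1 with hEdef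
  have hEcard : E.card = p ^ 2 - 1 := by
    rw [hEdef, Finset.card_erase_of_mem (Finset.mem_univ _), Finset.card_univ,
      ← Nat.card_eq_fintype_card, hcardQ]
  set S : Finset (Subgroup Q) := E.image (fun q => zpowers q) with hSdef
  have hmemS : ∀ H ∈ S, Nat.card H = p := by
    intro H hH
    obtain ⟨q, hqE, rfl⟩ := Finset.mem_image.mp hH
    rw [Nat.card_zpowers, horder q (Finset.ne_of_mem_erase hqE)]
  have hfiber : ∀ H ∈ S, (E.filter (fun q => zpowers q = H)).card ≤ p - 1 := by
    intro H hH
    have hsub : E.filter (fun q => zpowers q = H) ⊆ ((H : Set Q).toFinset.erase 1) := by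
      intro a ha
      obtain ⟨haE, haH⟩ := Finset.mem_filter.mp ha
      refine Finset.mem_erase.mpr ⟨Finset.ne_of_mem_erase haE, ?_⟩
      rw [Set.mem_toFinset]
      exact haH ▸ Subgroup.mem_zpowers a
    calc (E.filter (fun q => zpowers q = H)).card
        ≤ ((H : Set Q).toFinset.erase 1).card := Finset.card_le_card hsub
      _ = p - 1 := by
        rw [Finset.card_erase_of_mem (by rw [Set.mem_toFinset]; exact H.one_mem),
          Set.toFinset_card, ← Nat.card_eq_fintype_card]
        exact congrArg (· - 1) (hmemS H hH)
  have hScard : p + 1 ≤ S.card := by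
    have hb : E.card ≤ (p - 1) * S.card := Finset.card_le_mul_card_image E (p - 1) hfiber
    by_contra hlt
    push_neg at hlt
    have hSp : S.card ≤ p := Nat.lt_succ_iff.mp hlt
    have h2 : E.card ≤ (p - 1) * p := le_trans hb (Nat.mul_le_mul_left _ hSp)
    rw [hEcard] at h2
    have e1 : (p - 1) * p = p * p - p := by rw [Nat.sub_mul, one_mul]
    have e2 : p ^ 2 = p * p := sq p
    have e3 : 2 * p ≤ p * p := Nat.mul_le_mul_right p hp.two_le
    have h4 : 2 ≤ p := hp.two_le
    omega
  set T : Finset (Subgroup G) := S.image (fun H => H.comap φ) with hTdef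
  have hTcard : T.card = S.card := Finset.card_image_of_injective _ (Subgroup.comap_injective hφ)
  set n := Nat.card G with hndef
  have hn0 : n ≠ 0 := Nat.card_pos.ne'
  have hpn : p * p ∣ n := by rw [← hNidx]; exact N.index_dvd_card
  have hp_dvd_n : p ∣ n := dvd_trans (dvd_mul_right p p) hpn
  have hmemT : ∀ K ∈ T, K.Normal ∧ K.index = p ∧ Nat.card K = n / p := by
    intro K hK
    obtain ⟨H, hHS, rfl⟩ := Finset.mem_image.mp hK
    have hHn : H.Normal :=
      ⟨fun a ha g => by rw [hcomm g a, mul_assoc, mul_inv_cancel, mul_one]; exact ha⟩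
    have hHidx : H.index = p := by
      have hc1 : Nat.card H * H.index = p * p := by
        rw [Subgroup.card_mul_index, hcardQ, sq]
      rw [hmemS H hHS] at hc1
      exact Nat.eq_of_mul_eq_mul_left hp.pos hc1
    have hKidx : (H.comap φ).index = p := by
      have h := Subgroup.index_comap_of_surjective (H := H) hφ
      rw [h, hHidx]
    refine ⟨hHn.comap φ, hKidx, ?_⟩
    have hc2 : Nat.card (H.comap φ) * p = n := by
      rw [← hKidx, Subgroup.card_mul_index]
    rw [← hc2, Nat.mul_div_cancel _ hp.pos]
  have hbotT : (⊥ : Subgroup G) ∉ T := by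
    intro hbT
    have := (hmemT ⊥ hbT).2.1
    rw [Subgroup.index_bot] at this
    have hlt : p < p * p := by
      have := hp.two_le; nlinarith
    have hle' : p * p ≤ n := Nat.le_of_dvd (Nat.pos_of_ne_zero hn0) hpn
    omega
  have htopT : (⊤ : Subgroup G) ∉ T := by
    intro htT
    have := (hmemT ⊤ htT).2.1
    rw [Subgroup.index_top] at this
    exact hp.one_lt.ne this
  have hbotTop : (⊥ : Subgroup G) ≠ ⊤ := by
    intro hbt
    have h1 : Nat.card (⊥ : Subgroup G) = 1 := Subgroup.card_bot
    have h2 : Nat.card (⊤ : Subgroup G) = n := Subgroup.card_top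
    rw [hbt, h2] at h1
    have hle' : p * p ≤ n := Nat.le_of_dvd (Nat.pos_of_ne_zero hn0) hpn
    have := hp.two_le
    nlinarith
  have hbound := sum_le_normalSum (insert ⊥ (insert ⊤ T)) ?_
  swap
  · intro H hH
    rcases Finset.mem_insert.mp hH with rfl | hH'
    · infer_instance
    rcases Finset.mem_insert.mp hH' with rfl | hH''
    · infer_instance
    · exact (hmemT H hH'').1
  rw [Finset.sum_insert (by
        intro hmem
        rcases Finset.mem_insert.mp hmem with h | h
        · exact hbotTop h
        · exact hbotT h),
    Finset.sum_insert htopT] at hbound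
  have hsumT : ∑ K ∈ T, Nat.card K = T.card * (n / p) := by
    rw [Finset.sum_congr rfl (fun K hK => (hmemT K hK).2.2), Finset.sum_const, smul_eq_mul]
  rw [hsumT, Subgroup.card_bot, Subgroup.card_top, ← hndef] at hbound
  have hfin : normalSum G ≤ 2 * n := hle
  have hTlow : (p + 1) * (n / p) ≤ T.card * (n / p) :=
    Nat.mul_le_mul_right _ (hTcard ▸ hScard)
  have hppn : p * (n / p) = n := Nat.mul_div_cancel' hp_dvd_n
  have hnp1 : 1 ≤ n / p := Nat.one_le_div_iff hp.pos |>.mpr (Nat.le_of_dvd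
    (Nat.pos_of_ne_zero hn0) hp_dvd_n)
  have hexp : (p + 1) * (n / p) = n + n / p := by
    rw [add_mul, one_mul, hppn]
  omega

end Main

theorem nilpotent_mem_C3_iff (G : Type*) [Group G] [Finite G] (h : Group.IsNilpotent G) :
    normalSum G ≤ 2 * Nat.card G ↔
      IsCyclic G ∧ (∑ d ∈ (Nat.card G).divisors, d) ≤ 2 * Nat.card G := by
  constructor
  · intro hle
    have hc := isCyclic_of_normalSum_le h hle
    exact ⟨hc, by rw [← normalSum_of_isCyclic hc]; exact hle⟩
  · rintro ⟨hc, hσ⟩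
    rw [normalSum_of_isCyclic hc]
    exact hσ
end

section
/- If m is odd, then the order map from the set of normal subgroups of the dihedral group D_{2m} to the divisors of 2m is injective: D_{2m} has no two distinct normal subgroups of the same order. -/
open Subgroup DihedralGroup

/-- the subgroup of `d`-th roots of unity in a commutative group -/
def powKer (G : Type*) [CommGroup G] (d : ℕ) : Subgroup G where
  carrier := {x | x ^ d = 1}
  one_mem' := one_pow d
  mul_mem' := by
    intro a b ha hb
    simp only [Set.mem_setOf_eq] at *
    rw [mul_pow, ha, hb, one_mul]
  inv_mem' := by
    intro a ha
    simp only [Set.mem_setOf_eq] at *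
    rw [inv_pow, ha, inv_one]

lemma cyclic_subgroup_eq_ker_pow {G : Type*} [CommGroup G] [Fintype G] [IsCyclic G]
    (S : Subgroup G) : S = powKer G (Nat.card S) := by
  classical
  have hpos : 0 < Nat.card S := Nat.card_pos
  have hle : S ≤ powKer G (Nat.card S) := by
    intro x hx
    have h1 : (⟨x, hx⟩ : S) ^ Nat.card S = 1 := pow_card_eq_one'
    have h2 := congrArg (Subtype.val) h1
    rw [SubmonoidClass.coe_pow, OneMemClass.coe_one] at h2
    exact h2
  have hcard : Nat.card (powKer G (Nat.card S)) ≤ Nat.card S := by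
    have h1 : Nat.card (powKer G (Nat.card S))
        = Finset.card {a : G | a ^ (Nat.card S) = 1} := by
      rw [Nat.card_eq_fintype_card]
      trans Fintype.card {a : G // a ^ Nat.card S = 1}
      · exact Fintype.card_congr (Equiv.subtypeEquivRight fun x => Iff.rfl)
      · rw [Fintype.card_subtype]
    rw [h1]
    exact IsCyclic.card_pow_eq_one_le hpos
  have : (S : Set G) = ((powKer G (Nat.card S)) : Set G) := by
    apply Set.eq_of_subset_of_ncard_le hle
    · rw [← Nat.card_coe_set_eq, ← Nat.card_coe_set_eq]
      exact hcard
  exact SetLike.ext' this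

lemma cyclic_card_inj {G : Type*} [Group G] [Fintype G] [IsCyclic G]
    (H K : Subgroup G) (h : Nat.card H = Nat.card K) : H = K := by
  let _ : CommGroup G := IsCyclic.commGroup
  rw [cyclic_subgroup_eq_ker_pow H, cyclic_subgroup_eq_ker_pow K, h]

theorem dihedral_odd_normal_card_injective (m : ℕ) (hm : Odd m)
    (H K : Subgroup (DihedralGroup m)) (hH : H.Normal) (hK : K.Normal)
    (hcard : Nat.card H = Nat.card K) :
    H = K := by
  haveI : NeZero m := ⟨hm.pos.ne'⟩
  -- the rotation embedding
  let f : Multiplicative (ZMod m) →* DihedralGroup m :=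
    { toFun := fun x => r x.toAdd
      map_one' := rfl
      map_mul' := fun x y => (r_mul_r _ _).symm }
  have hfinj : Function.Injective f := by
    intro x y hxy
    exact Multiplicative.toAdd.injective (r.inj hxy)
  -- two is invertible mod m
  have htwo : IsUnit (2 : ZMod m) := by
    have : IsUnit ((2 : ℕ) : ZMod m) := by
      rw [ZMod.isUnit_iff_coprime]
      exact hm.coprime_two_left
    simpa using this
  -- a normal subgroup containing a reflection is everything
  have key : ∀ (S : Subgroup (DihedralGroup m)), S.Normal → (∃ i, sr i ∈ S) → S = ⊤ := by
    intro S hS ⟨i, hi⟩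
    have hsr : ∀ j : ZMod m, sr j ∈ S := by
      intro j
      obtain ⟨u, hu⟩ := htwo
      have hc := hS.conj_mem _ hi (r ((u : ZMod m)⁻¹ * (i - j)))
      have hinv : (r ((u:ZMod m)⁻¹ * (i - j)))⁻¹ = r (-((u:ZMod m)⁻¹ * (i - j))) :=
        inv_eq_of_mul_eq_one_right (by rw [r_mul_r, add_neg_cancel]; exact one_def.symm)
      have : r ((u:ZMod m)⁻¹ * (i - j)) * sr i * (r ((u:ZMod m)⁻¹ * (i - j)))⁻¹ = sr j := by
        rw [hinv, r_mul_sr, sr_mul_r]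
        congr 1
        have h1 : (2 : ZMod m) * ((u : ZMod m))⁻¹ = 1 := by
          rw [← hu]; exact ZMod.mul_inv_of_unit _ u.isUnit
        linear_combination (j - i) * h1
      rwa [this] at hc
    have hr : ∀ j : ZMod m, r j ∈ S := by
      intro j
      have := S.mul_mem (hsr 0) (hsr j)
      simpa [sr_mul_sr] using this
    rw [eq_top_iff]
    rintro (j | j) _
    · exact hr j
    · exact hsr j
  by_cases hHt : H = ⊤
  · have : Nat.card K = Nat.card (DihedralGroup m) := by
      rw [← hcard, hHt]
      exact (Nat.card_congr Subgroup.topEquiv.toEquiv)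
    rw [hHt, (Subgroup.card_eq_iff_eq_top K).mp this]
  by_cases hKt : K = ⊤
  · have : Nat.card H = Nat.card (DihedralGroup m) := by
      rw [hcard, hKt]
      exact (Nat.card_congr Subgroup.topEquiv.toEquiv)
    rw [hKt, (Subgroup.card_eq_iff_eq_top H).mp this]
  -- both are contained in the rotation subgroup
  have hle : ∀ (S : Subgroup (DihedralGroup m)), S.Normal → S ≠ ⊤ → S ≤ f.range := by
    intro S hS hSt x hx
    match x with
    | r j => exact ⟨Multiplicative.ofAdd j, rfl⟩
    | sr j => exact absurd (key S hS ⟨j, hx⟩) hSt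
  have hHle := hle H hH hHt
  have hKle := hle K hK hKt
  have hHmap : Subgroup.map f (Subgroup.comap f H) = H := Subgroup.map_comap_eq_self hHle
  have hKmap : Subgroup.map f (Subgroup.comap f K) = K := Subgroup.map_comap_eq_self hKle
  have hc : Nat.card (Subgroup.comap f H) = Nat.card (Subgroup.comap f K) := by
    have e1 := Nat.card_congr (Subgroup.equivMapOfInjective (Subgroup.comap f H) f hfinj).toEquiv
    have e2 := Nat.card_congr (Subgroup.equivMapOfInjective (Subgroup.comap f K) f hfinj).toEquiv
    rw [e1, e2, hHmap, hKmap, hcard]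
  have := cyclic_card_inj (Subgroup.comap f H) (Subgroup.comap f K) hc
  rw [← hHmap, ← hKmap, this]
end
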